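/- If U' is obtained from a unit interval order U on {1,...,n} by adding a rightmost interval I_{n+1}, then the Dyck path a(U') is obtained from a(U) by adding a final peak at position (n−s, n+1), where s is the number of elements of U' incomparable to n+1. -/

import Mathlib

/-- A unit interval order on `Fin n`: `x ≺ y` implies `x < y`, and
`x ≺ y` implies `x' ≺ y'` for all `x' ≤ x` and `y' ≥ y`. -/
def IsUIO {n : ℕ} (r : Fin n → Fin n → Prop) : Prop :=
  (∀ x y, r x y → x < y) ∧
  (∀ x y, r x y → ∀ x' y', x' ≤ x → y ≤ y' → r x' y')

lemma card_val_filter (n a b : ℕ) (hb : b ≤ n + 1) :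
    (Finset.univ.filter (fun k : Fin (n + 1) => a ≤ k.val ∧ k.val < b)).card = b - a := by
  rw [← Nat.card_Ico a b]
  apply Finset.card_nbij (i := Fin.val)
  · intro k hk
    simp only [Finset.mem_coe, Finset.mem_filter] at hk
    simp [Finset.mem_Ico, hk.2.1, hk.2.2]
  · intro x _ y _ hxy
    exact Fin.val_injective hxy
  · intro m hm
    simp only [Finset.coe_Ico, Set.mem_Ico] at hm
    refine ⟨⟨m, by omega⟩, by simp [hm.1, hm.2], rfl⟩

/-- If `U'` is obtained from a unit interval order `U` on
`{1,…,n}` by adding a rightmost interval `I_{n+1}`, then the Dyck path `a(U')`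
is obtained from `a(U)` by adding a final peak at position `(n − s, n + 1)`,
where `s` is the number of elements of `U'` incomparable to `n + 1`: the area
set of `a(U')` consists of the boxes of `a(U)` together with the new boxes
`(i, n + 1)` for the last `s` values of `i`. -/
theorem a_extend {n : ℕ} (r : Fin n → Fin n → Prop)
    (r' : Fin (n + 1) → Fin (n + 1) → Prop) [DecidableRel r']
    (h : IsUIO r) (h' : IsUIO r')
    (hres : ∀ i j : Fin n, r' i.castSucc j.castSucc ↔ r i j)
    (s : ℕ)
    (hs : s = (Finset.univ.filter (fun i : Fin (n + 1) =>
      i ≠ Fin.last n ∧ ¬ r' i (Fin.last n) ∧ ¬ r' (Fin.last n) i)).card) :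
    ∀ i j : Fin (n + 1), (i < j ∧ ¬ r' i j) ↔
      ((∃ i₀ j₀ : Fin n, i = i₀.castSucc ∧ j = j₀.castSucc ∧ i₀ < j₀ ∧ ¬ r i₀ j₀) ∨
        (j = Fin.last n ∧ i ≠ j ∧ n - s ≤ i.val)) := by
  -- nothing is above the last element
  have hno : ∀ i : Fin (n + 1), ¬ r' (Fin.last n) i := fun i hr =>
    (Fin.le_last i : i ≤ Fin.last n).not_gt (h'.1 _ _ hr)
  -- key characterization of incomparability with the last element
  have key : ∀ i : Fin (n + 1), i.val < n → (¬ r' i (Fin.last n) ↔ n - s ≤ i.val) := by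
    intro i hi
    constructor
    · intro hnr
      have hsub : (Finset.univ.filter (fun k : Fin (n + 1) => i.val ≤ k.val ∧ k.val < n)) ⊆
          (Finset.univ.filter (fun k : Fin (n + 1) =>
            k ≠ Fin.last n ∧ ¬ r' k (Fin.last n) ∧ ¬ r' (Fin.last n) k)) := by
        intro k hk
        simp only [Finset.mem_filter, Finset.mem_univ, true_and] at hk ⊢
        refine ⟨fun hk' => by subst hk'; simp at hk, fun hr => hnr ?_, hno k⟩
        exact h'.2 _ _ hr i (Fin.last n) (by exact hk.1) le_rfl
      have hcard := Finset.card_le_card hsub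
      rw [card_val_filter n i.val n (by omega), ← hs] at hcard
      omega
    · intro hge hr
      have hsub : (Finset.univ.filter (fun k : Fin (n + 1) =>
            k ≠ Fin.last n ∧ ¬ r' k (Fin.last n) ∧ ¬ r' (Fin.last n) k)) ⊆
          (Finset.univ.filter (fun k : Fin (n + 1) => i.val + 1 ≤ k.val ∧ k.val < n)) := by
        intro k hk
        simp only [Finset.mem_filter, Finset.mem_univ, true_and] at hk ⊢
        have hkn : k.val < n := by
          have := Fin.le_last k
          rcases lt_or_eq_of_le this with h1 | h1
          · simpa [Fin.lt_def] using h1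
          · exact absurd h1 hk.1
        refine ⟨?_, hkn⟩
        by_contra hle
        exact hk.2.1 (h'.2 _ _ hr k (Fin.last n) (by omega) le_rfl)
      have hcard := Finset.card_le_card hsub
      rw [card_val_filter n (i.val + 1) n (by omega)] at hcard
      rw [← hs] at hcard
      omega
  intro i j
  constructor
  · rintro ⟨hij, hnr⟩
    by_cases hj : j = Fin.last n
    · subst hj
      right
      refine ⟨rfl, ne_of_lt hij, (key i (by simpa [Fin.lt_def, Fin.last] using hij)).mp hnr⟩
    · left
      have hjn : j.val < n := by
        have := Fin.le_last j
        rcases lt_or_eq_of_le this with h1 | h1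
        · simpa [Fin.lt_def] using h1
        · exact absurd h1 hj
      have hin : i.val < n := lt_trans (Fin.lt_def.mp hij) hjn
      refine ⟨⟨i.val, hin⟩, ⟨j.val, hjn⟩, Fin.ext rfl, Fin.ext rfl,
        Fin.mk_lt_mk.mpr (Fin.lt_def.mp hij), fun hrr => hnr ?_⟩
      have := (hres ⟨i.val, hin⟩ ⟨j.val, hjn⟩).mpr hrr
      have hie : i = Fin.castSucc ⟨i.val, hin⟩ := Fin.ext rfl
      have hje : j = Fin.castSucc ⟨j.val, hjn⟩ := Fin.ext rfl
      rw [hie, hje]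
      exact this
  · rintro (⟨i₀, j₀, hi, hj, hlt, hnr⟩ | ⟨hj, hne, hge⟩)
    · subst hi; subst hj
      exact ⟨by simpa using hlt, fun hr => hnr ((hres i₀ j₀).mp hr)⟩
    · subst hj
      have hin : i.val < n := by
        have := Fin.le_last i
        rcases lt_or_eq_of_le this with h1 | h1
        · simpa [Fin.lt_def] using h1
        · exact absurd h1 hne
      exact ⟨by simp only [Fin.lt_def, Fin.val_last]; exact hin, (key i hin).mpr hge⟩
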